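/- Let k : ℕ → ℕ be strictly increasing and let T ⊆ 2^{<ω} be a tree (a set of finite 0-1 sequences closed under initial segments, containing the empty sequence, with every node having an extension in T of every greater length) satisfying: (1) for s ∈ T, both s⌢0 ∈ T and s⌢1 ∈ T if and only if |s| = k_n for some n; (2) for every n, if s₁, …, s_{2ⁿ} lists T ∩ 2^{k_n} in lexicographic order, then for every w ⊆ {1, …, 2ⁿ} with w ≠ ∅ and w ≠ {1, …, 2ⁿ} there is m with k_n ≤ m < k_{n+1} such that for each l, the unique node of T of length m+1 extending s_l takes value 0 at position m if and only if l ∈ w; (3) there is no m such that s(m) = 0 for all s ∈ T ∩ 2^{m+1}, and no m such that s(m) = 1 for all s ∈ T ∩ 2^{m+1}. For a perfect subtree S of T (a subtree in which every node has two incomparable extensions) define A⁰_S = {m : s(m) = 0 for all s ∈ S ∩ 2^{m+1}} and A¹_S = {m : s(m) = 1 for all s ∈ S ∩ 2^{m+1}}. Then for any finitely many perfect subtrees S₁, …, S_m of T, the set ℕ \ (A⁰_{S₁} ∪ A¹_{S₁} ∪ ⋯ ∪ A⁰_{S_m} ∪ A¹_{S_m}) is infinite; in particular the ideal on ℕ generated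 by all sets A⁰_S, A¹_S (S a perfect subtree of T) together with the finite sets is a proper ideal. -/
import Mathlib


/-- `T ⊆ 2^{<ω}` is a tree: it contains the empty sequence, is closed under initial
segments, and every node has an extension in `T` of every greater length. -/
def IsTree (T : Set (List Bool)) : Prop :=
  ([] ∈ T) ∧ (∀ s ∈ T, ∀ t : List Bool, t <+: s → t ∈ T) ∧
    (∀ s ∈ T, ∀ n : ℕ, s.length ≤ n → ∃ t ∈ T, t.length = n ∧ s <+: t)

/-- Condition (1): a node `s ∈ T` has both immediate successors `s⌢0, s⌢1` in `T`
exactly when `|s| = k n` for some `n`. -/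
def SplitsExactlyAt (k : ℕ → ℕ) (T : Set (List Bool)) : Prop :=
  ∀ s ∈ T, ((s ++ [false] ∈ T ∧ s ++ [true] ∈ T) ↔ ∃ n : ℕ, s.length = k n)

/-- Condition (2): for every `n` and every nonempty proper subset `W` of the level
`T ∩ 2^{k n}` there is `m` with `k n ≤ m < k (n+1)` such that the (unique) node of `T`
of length `m+1` extending a node `s` of the level takes value `0` at position `m`
exactly when `s ∈ W`.  (The subsets `W` of the level correspond, via the lexicographic
listing `s₁, …, s_{2ⁿ}` of the level, to the subsets `w ⊆ {1, …, 2ⁿ}`.) -/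
def SeparatesLevels (k : ℕ → ℕ) (T : Set (List Bool)) : Prop :=
  ∀ n : ℕ, ∀ W : Set (List Bool),
    W ⊆ {s ∈ T | s.length = k n} → W ≠ ∅ → W ≠ {s ∈ T | s.length = k n} →
      ∃ m : ℕ, k n ≤ m ∧ m < k (n + 1) ∧
        ∀ s ∈ T, s.length = k n → ∀ t ∈ T, t.length = m + 1 → s <+: t →
          (t.getD m true = false ↔ s ∈ W)

/-- Condition (3): there is no `m` such that `s (m) = 0` for all `s ∈ T ∩ 2^{m+1}`, and
no `m` such that `s (m) = 1` for all `s ∈ T ∩ 2^{m+1}`. -/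
def NoConstantCoordinate (T : Set (List Bool)) : Prop :=
  (¬ ∃ m : ℕ, ∀ t ∈ T, t.length = m + 1 → t.getD m true = false) ∧
  (¬ ∃ m : ℕ, ∀ t ∈ T, t.length = m + 1 → t.getD m false = true)

/-- `S` is a perfect subtree of `T`: a subset of `T` which is itself closed under initial
segments, contains the empty sequence, and in which every node has two incomparable
extensions. -/
def IsPerfectSubtree (T S : Set (List Bool)) : Prop :=
  S ⊆ T ∧ ([] ∈ S) ∧ (∀ s ∈ S, ∀ t : List Bool, t <+: s → t ∈ S) ∧
    ∀ s ∈ S, ∃ t₁ ∈ S, ∃ t₂ ∈ S,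
      s <+: t₁ ∧ s <+: t₂ ∧ ¬ t₁ <+: t₂ ∧ ¬ t₂ <+: t₁

/-- `A⁰_S = {m : s(m) = 0 for all s ∈ S ∩ 2^{m+1}}`. -/
def A0 (S : Set (List Bool)) : Set ℕ :=
  {m | ∀ t ∈ S, t.length = m + 1 → t.getD m true = false}

/-- `A¹_S = {m : s(m) = 1 for all s ∈ S ∩ 2^{m+1}}`. -/
def A1 (S : Set (List Bool)) : Set ℕ :=
  {m | ∀ t ∈ S, t.length = m + 1 → t.getD m false = true}


section helpers

variable {T S : Set (List Bool)}

lemma take_of_prefix {s u : List Bool} (h : s <+: u) : u.take s.length = s :=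
  (List.prefix_iff_eq_take.mp h).symm

lemma prefix_take_of_prefix {s t : List Bool} (h : s <+: t) {a : ℕ} (ha : s.length ≤ a) :
    s <+: t.take a := by
  have h1 : (t.take a).take s.length = t.take s.length := by
    rw [List.take_take, min_eq_left ha]
  have := List.take_prefix s.length (t.take a)
  rwa [h1, take_of_prefix h] at this

lemma exists_longer (hp : IsPerfectSubtree T S) :
    ∀ s ∈ S, ∃ t ∈ S, s <+: t ∧ s.length < t.length := by
  intro s hs
  obtain ⟨t₁, ht₁, t₂, ht₂, hp1, hp2, h12, h21⟩ := hp.2.2.2 s hs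
  refine ⟨t₁, ht₁, hp1, ?_⟩
  rcases hp1.length_le.lt_or_eq with h | h
  · exact h
  · exact absurd ((hp1.eq_of_length h) ▸ hp2) h12

lemma exists_ge (hp : IsPerfectSubtree T S) :
    ∀ d : ℕ, ∀ s ∈ S, ∃ t ∈ S, s <+: t ∧ s.length + d ≤ t.length := by
  intro d
  induction d with
  | zero => intro s hs; exact ⟨s, hs, List.prefix_refl s, by omega⟩
  | succ d ih =>
    intro s hs
    obtain ⟨t, ht, hst, hlen⟩ := ih s hs
    obtain ⟨u, hu, htu, hlt⟩ := exists_longer hp t ht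
    exact ⟨u, hu, hst.trans htu, by omega⟩

lemma exists_exact (hp : IsPerfectSubtree T S) :
    ∀ s ∈ S, ∀ a : ℕ, s.length ≤ a → ∃ t ∈ S, t.length = a ∧ s <+: t := by
  intro s hs a ha
  obtain ⟨t, ht, hst, hlen⟩ := exists_ge hp (a - s.length) s hs
  refine ⟨t.take a, hp.2.2.1 t ht _ (List.take_prefix a t), ?_,
    prefix_take_of_prefix hst ha⟩
  rw [List.length_take]; omega

lemma levels_grow (hp : IsPerfectSubtree T S) (c : ℕ) :
    ∃ a : ℕ, ∃ f : Fin (c + 1) → List Bool, Function.Injective f ∧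
      (∀ i, f i ∈ S) ∧ (∀ i, (f i).length = a) := by
  induction c with
  | zero =>
    exact ⟨0, fun _ => [], fun i i' _ => Fin.ext (by omega),
      fun _ => hp.2.1, fun _ => rfl⟩
  | succ c ih =>
    obtain ⟨a, f, hfinj, hfmem, hflen⟩ := ih
    obtain ⟨t₁, ht₁, t₂, ht₂, hp1, hp2, h12, h21⟩ := hp.2.2.2 (f 0) (hfmem 0)
    set b := max t₁.length t₂.length with hb
    obtain ⟨u₁, hu₁, hu₁len, htu₁⟩ := exists_exact hp t₁ ht₁ b (le_max_left _ _)
    obtain ⟨u₂, hu₂, hu₂len, htu₂⟩ := exists_exact hp t₂ ht₂ b (le_max_right _ _)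
    have hune : u₁ ≠ u₂ := by
      intro h; subst h
      rcases List.prefix_or_prefix_of_prefix htu₁ htu₂ with h | h
      exacts [h12 h, h21 h]
    have hab : a ≤ b := by
      have := hp1.length_le
      rw [hflen 0] at this
      omega
    have hext : ∀ i : Fin (c + 1), ∃ t ∈ S, t.length = b ∧ f i <+: t := fun i =>
      exists_exact hp (f i) (hfmem i) b (by rw [hflen i]; exact hab)
    choose E hEmem hElen hEpre using hext
    set G : Fin (c + 1) → List Bool := fun i => if i = 0 then u₁ else E i with hG
    have hGmem : ∀ i, G i ∈ S := by
      intro i; by_cases h : i = 0 <;> simp [hG, h]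
      exacts [hu₁, hEmem i]
    have hGlen : ∀ i, (G i).length = b := by
      intro i; by_cases h : i = 0 <;> simp [hG, h]
      exacts [hu₁len, hElen i]
    have hGtake : ∀ i, (G i).take a = f i := by
      intro i; by_cases h : i = 0 <;> simp [hG, h]
      · have : f 0 <+: u₁ := hp1.trans htu₁
        have := take_of_prefix this
        rwa [hflen 0] at this
      · have := take_of_prefix (hEpre i)
        rwa [hflen i] at this
    have hGinj : Function.Injective G := by
      intro i i' h
      apply hfinj
      rw [← hGtake i, ← hGtake i', h]
    have hu₂take : u₂.take a = f 0 := by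
      have := take_of_prefix (hp2.trans htu₂)
      rwa [hflen 0] at this
    have hu₂nr : u₂ ∉ Set.range G := by
      rintro ⟨i, rfl⟩
      rw [hGtake i] at hu₂take
      have hi0 : i = 0 := hfinj hu₂take
      subst hi0
      apply hune
      simp [hG]
    refine ⟨b, Fin.cons u₂ G, Fin.cons_injective_of_injective hu₂nr hGinj, ?_, ?_⟩
    · intro i
      refine Fin.cases ?_ ?_ i
      · rw [Fin.cons_zero]; exact hu₂
      · intro i'; rw [Fin.cons_succ]; exact hGmem i'
    · intro i
      refine Fin.cases ?_ ?_ i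
      · rw [Fin.cons_zero]; exact hu₂len
      · intro i'; rw [Fin.cons_succ]; exact hGlen i'

end helpers

/-- For any finitely many perfect subtrees `S₁, …, S_m` of `T`, the complement of
`A⁰_{S₁} ∪ A¹_{S₁} ∪ ⋯ ∪ A⁰_{S_m} ∪ A¹_{S_m}` is infinite; in particular the ideal
generated by the sets `A⁰_S, A¹_S` together with the finite sets is proper. -/
theorem tree_ideal_is_proper
    (k : ℕ → ℕ) (hk : StrictMono k)
    (T : Set (List Bool)) (hT : IsTree T)
    (h1 : SplitsExactlyAt k T) (h2 : SeparatesLevels k T)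
    (h3 : NoConstantCoordinate T)
    (m : ℕ) (S : Fin m → Set (List Bool))
    (hS : ∀ j : Fin m, IsPerfectSubtree T (S j)) :
    {i : ℕ | ∀ j : Fin m, i ∉ A0 (S j) ∧ i ∉ A1 (S j)}.Infinite := by
  rcases Nat.eq_zero_or_pos m with hm | hm
  · subst hm
    have he : {i : ℕ | ∀ j : Fin 0, i ∉ A0 (S j) ∧ i ∉ A1 (S j)} = Set.univ := by
      ext i
      simp only [Set.mem_setOf_eq, Set.mem_univ, iff_true]
      exact fun j => j.elim0
    rw [he]
    exact Set.infinite_univ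
  apply Set.infinite_of_forall_exists_gt
  intro N
  -- for each j, get m+1 distinct nodes of S j at some level a j
  have hlg : ∀ j : Fin m, ∃ a : ℕ, ∃ f : Fin (m + 1) → List Bool,
      Function.Injective f ∧ (∀ i, f i ∈ S j) ∧ (∀ i, (f i).length = a) :=
    fun j => levels_grow (hS j) m
  choose a F hFinj hFmem hFlen using hlg
  -- choose a splitting level k n above all a j and above N
  set n : ℕ := max (Finset.univ.sup a) (N + 1) with hn
  have hkn_ge : ∀ j, a j ≤ k n := by
    intro j
    calc a j ≤ Finset.univ.sup a := Finset.le_sup (Finset.mem_univ j)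
    _ ≤ n := le_max_left _ _
    _ ≤ k n := hk.le_apply
  have hkN : N < k n := by
    calc N < N + 1 := Nat.lt_succ_self N
    _ ≤ n := le_max_right _ _
    _ ≤ k n := hk.le_apply
  -- extend each chosen node to level k n within S j
  have hext : ∀ (j : Fin m) (i : Fin (m + 1)), ∃ t ∈ S j, t.length = k n ∧ F j i <+: t :=
    fun j i => exists_exact (hS j) (F j i) (hFmem j i) (k n) (by rw [hFlen j i]; exact hkn_ge j)
  choose G hGmem hGlen hGpre using hext
  have hGtake : ∀ j i, (G j i).take (a j) = F j i := by
    intro j i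
    have := take_of_prefix (hGpre j i)
    rwa [hFlen j i] at this
  have hGinj : ∀ j, Function.Injective (G j) := by
    intro j i i' h
    apply hFinj j
    rw [← hGtake j i, ← hGtake j i', h]
  -- the separating set W
  set W : Set (List Bool) := Set.range (fun j : Fin m => G j 0) with hW
  have hWsub : W ⊆ {s ∈ T | s.length = k n} := by
    rintro _ ⟨j, rfl⟩
    exact ⟨(hS j).1 (hGmem j 0), hGlen j 0⟩
  have hmiss : ∀ j, ∃ i : Fin (m + 1), G j i ∉ W := by
    intro j
    by_contra h
    push_neg at h
    choose φ hφ using h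
    have hφinj : Function.Injective φ := by
      intro i i' hii
      apply hGinj j
      rw [← hφ i, ← hφ i', hii]
    have := Fintype.card_le_of_injective φ hφinj
    simp only [Fintype.card_fin] at this
    omega
  set j₀ : Fin m := ⟨0, hm⟩ with hj₀
  have hWne : W ≠ ∅ := by
    intro h
    have : G j₀ 0 ∈ W := ⟨j₀, rfl⟩
    rw [h] at this
    exact this
  have hWproper : W ≠ {s ∈ T | s.length = k n} := by
    intro h
    obtain ⟨i, hi⟩ := hmiss j₀
    apply hi
    rw [h]
    exact ⟨(hS j₀).1 (hGmem j₀ i), hGlen j₀ i⟩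
  obtain ⟨m₀, hm₀1, hm₀2, hP⟩ := h2 n W hWsub hWne hWproper
  refine ⟨m₀, ?_, lt_of_lt_of_le hkN hm₀1⟩
  intro j
  constructor
  · -- m₀ ∉ A0 (S j) : use the node G j i outside W
    obtain ⟨i, hi⟩ := hmiss j
    obtain ⟨t, htS, htlen, htpre⟩ := exists_exact (hS j) (G j i) (hGmem j i) (m₀ + 1)
      (by rw [hGlen j i]; omega)
    intro hA0
    have hiff := hP (G j i) ((hS j).1 (hGmem j i)) (hGlen j i) t ((hS j).1 htS) htlen htpre
    exact hi (hiff.mp (hA0 t htS htlen))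
  · -- m₀ ∉ A1 (S j) : use the node G j 0 ∈ W
    obtain ⟨t, htS, htlen, htpre⟩ := exists_exact (hS j) (G j 0) (hGmem j 0) (m₀ + 1)
      (by rw [hGlen j 0]; omega)
    intro hA1
    have hiff := hP (G j 0) ((hS j).1 (hGmem j 0)) (hGlen j 0) t ((hS j).1 htS) htlen htpre
    have hfalse : t.getD m₀ true = false := hiff.mpr ⟨j, rfl⟩
    have htrue : t.getD m₀ false = true := hA1 t htS htlen
    have hlt : m₀ < t.length := by omega
    rw [List.getD_eq_getElem _ _ hlt] at hfalse htrue
    rw [hfalse] at htrue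
    exact Bool.false_ne_true htrue
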